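/- arXiv:2108.01119 — 5 statements merged into one kernel-verified Lean document; each statement's English description precedes it below -/
import Mathlib

section
/- In the fan graph F_{m,1} (the join of the empty graph on m ≥ 1 vertices with a single vertex), every vertex of the form {w_i, w_i} in M_2(F_{m,1}) has degree 1; consequently if m ≥ 2 then M_2(F_{m,1}) is not Hamiltonian. -/
/-- The complete double vertex graph `M₂(G)`: vertices are the 2-multisubsets
of `V(G)` (modelled as `Sym2 V`), two of them adjacent when their symmetric
difference (as multisets) is a pair of adjacent vertices of `G`. -/
def M2 {V : Type*} (G : SimpleGraph V) : SimpleGraph (Sym2 V) where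
  Adj s t := ∃ x y z, G.Adj y z ∧ s = s(x, y) ∧ t = s(x, z)
  symm := by
    constructor
    rintro s t ⟨x, y, z, h, rfl, rfl⟩
    exact ⟨x, z, y, h.symm, rfl, rfl⟩
  loopless := by
    constructor
    rintro s ⟨x, y, z, h, rfl, heq⟩
    rw [Sym2.eq_iff] at heq
    rcases heq with ⟨-, rfl⟩ | ⟨rfl, rfl⟩
    · exact h.ne rfl
    · exact h.ne rfl

/-- The join `G + H` of two disjoint graphs. -/
def joinGraph {α β : Type*} (G : SimpleGraph α) (H : SimpleGraph β) :
    SimpleGraph (α ⊕ β) where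
  Adj x y :=
    match x, y with
    | .inl a, .inl b => G.Adj a b
    | .inr a, .inr b => H.Adj a b
    | .inl _, .inr _ => True
    | .inr _, .inl _ => True
  symm := by constructor; rintro (a | a) (b | b) h <;> simp_all [SimpleGraph.adj_comm]
  loopless := by constructor; rintro (a | a) h <;> simp_all

/-- The generalized fan graph `F_{m,n} = E_m + P_n`. -/
def fanGraph (m n : ℕ) : SimpleGraph (Fin m ⊕ Fin n) :=
  joinGraph ⊥ (SimpleGraph.pathGraph n)


open SimpleGraph in
/-- If `v` lies on a cycle, it has two distinct neighbors. -/
lemma cycle_two_adj {V : Type*} {G : SimpleGraph V} {v : V} {p : G.Walk v v}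
    (hp : p.IsCycle) : ∃ w u, w ≠ u ∧ G.Adj v w ∧ G.Adj v u := by
  obtain ⟨w, h1, q, rfl⟩ := SimpleGraph.Walk.not_nil_iff.mp hp.not_nil
  have hcyc := (SimpleGraph.Walk.cons_isCycle_iff q h1).mp hp
  have hlen : 3 ≤ (Walk.cons h1 q).length := hp.three_le_length
  have hqlen : 0 < q.length := by simp [Walk.length_cons] at hlen ⊢; omega
  have hqnil : ¬ q.reverse.Nil := by
    rw [Walk.nil_iff_length_eq]
    simp only [Walk.length_reverse]; omega
  obtain ⟨u, h2, q2, hq⟩ := SimpleGraph.Walk.not_nil_iff.mp hqnil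
  refine ⟨w, u, ?_, h1, h2⟩
  rintro rfl
  apply hcyc.2
  have : s(v, w) ∈ q.reverse.edges := by rw [hq]; simp
  rw [Walk.edges_reverse, List.mem_reverse] at this
  exact this

theorem stmt_3 (m : ℕ) (hm : 1 ≤ m) :
    (∀ i : Fin m, ∃! t : Sym2 (Fin m ⊕ Fin 1),
      (M2 (fanGraph m 1)).Adj s(Sum.inl i, Sum.inl i) t) ∧
    (2 ≤ m → ¬ (M2 (fanGraph m 1)).IsHamiltonian) := by
  have key : ∀ i : Fin m, ∃! t : Sym2 (Fin m ⊕ Fin 1),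
      (M2 (fanGraph m 1)).Adj s(Sum.inl i, Sum.inl i) t := by
    intro i
    refine ⟨s(Sum.inl i, Sum.inr 0), ⟨Sum.inl i, Sum.inl i, Sum.inr 0, ?_, rfl, rfl⟩, ?_⟩
    · show (fanGraph m 1).Adj (Sum.inl i) (Sum.inr 0)
      trivial
    · rintro t ⟨x, y, z, hadj, hs, rfl⟩
      rw [Sym2.eq_iff] at hs
      have hx : x = Sum.inl i ∧ y = Sum.inl i := by
        rcases hs with ⟨h1, h2⟩ | ⟨h1, h2⟩
        exacts [⟨h1.symm, h2.symm⟩, ⟨h2.symm, h1.symm⟩]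
      obtain ⟨rfl, rfl⟩ := hx
      rcases z with j | j
      · exact absurd hadj (by simp [fanGraph, joinGraph])
      · rw [Subsingleton.elim j 0]
  refine ⟨key, fun hm2 hham => ?_⟩
  have hcard : Fintype.card (Sym2 (Fin m ⊕ Fin 1)) ≠ 1 := by
    have h2 : (s(Sum.inl ⟨0, by omega⟩, Sum.inl ⟨0, by omega⟩) : Sym2 (Fin m ⊕ Fin 1)) ≠
        s(Sum.inl ⟨1, by omega⟩, Sum.inl ⟨1, by omega⟩) := by
      simp [Sym2.eq_iff]
    have : Nontrivial (Sym2 (Fin m ⊕ Fin 1)) := ⟨_, _, h2⟩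
    exact (Fintype.one_lt_card).ne'
  obtain ⟨a, p, hp⟩ := hham hcard
  set v : Sym2 (Fin m ⊕ Fin 1) := s(Sum.inl ⟨0, by omega⟩, Sum.inl ⟨0, by omega⟩) with hv
  have hvs : v ∈ p.support := hp.mem_support v
  have hcyc : ((p.rotate v hvs)).IsCycle := hp.isCycle.rotate hvs
  obtain ⟨w, u, hne, h1, h2⟩ := cycle_two_adj hcyc
  obtain ⟨t, -, ht⟩ := key ⟨0, by omega⟩
  exact hne ((ht w h1).trans (ht u h2).symm)
end

section
/- For positive integers m and n ≥ 2 with m > 2(n−1), the complete double vertex graph M_2(F_{m,n}) is not Hamiltonian. -/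
open SimpleGraph Finset

section Aux

variable {m n : ℕ}

private lemma injS : Function.Injective
    (fun q : Fin m × Fin n => s(Sum.inl q.1, (Sum.inr q.2 : Fin m ⊕ Fin n))) := by
  rintro ⟨a, c⟩ ⟨b, d⟩ h
  simp only [Sym2.eq_iff] at h
  rcases h with ⟨h1, h2⟩ | ⟨h1, h2⟩ <;> simp_all

/-- The mixed pairs. -/
private def Smix (m n : ℕ) : Finset (Sym2 (Fin m ⊕ Fin n)) :=
  Finset.univ.map ⟨_, injS (m := m) (n := n)⟩

/-- The pure-left pairs. -/
private def Aset (m n : ℕ) : Finset (Sym2 (Fin m ⊕ Fin n)) :=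
  Finset.univ.map ⟨Sym2.map Sum.inl, Sym2.map.injective Sum.inl_injective⟩

private lemma mem_Smix_iff {s : Sym2 (Fin m ⊕ Fin n)} :
    s ∈ Smix m n ↔ ∃ a b, s = s(Sum.inl a, Sum.inr b) := by
  simp only [Smix, Finset.mem_map, Finset.mem_univ, true_and, Function.Embedding.coeFn_mk,
    Prod.exists, eq_comm]

private lemma mem_Aset_iff {s : Sym2 (Fin m ⊕ Fin n)} :
    s ∈ Aset m n ↔ ∃ a b, s = s(Sum.inl a, Sum.inl b) := by
  simp only [Aset, Finset.mem_map, Finset.mem_univ, true_and, Function.Embedding.coeFn_mk]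
  constructor
  · rintro ⟨u, rfl⟩
    induction u using Sym2.ind with
    | _ a b => exact ⟨a, b, by simp⟩
  · rintro ⟨a, b, rfl⟩
    exact ⟨s(a, b), by simp⟩

/-- The pure-right predicate. -/
private def PR (s : Sym2 (Fin m ⊕ Fin n)) : Prop :=
  ∃ a b : Fin n, s = s(Sum.inr a, Sum.inr b)

private lemma adjA {s t : Sym2 (Fin m ⊕ Fin n)}
    (h : (M2 (fanGraph m n)).Adj s t) (ht : t ∈ Aset m n) : s ∈ Smix m n := by
  obtain ⟨x, y, z, hyz, rfl, rfl⟩ := h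
  rw [mem_Aset_iff] at ht
  obtain ⟨a, b, hab⟩ := ht
  rw [Sym2.eq_iff] at hab
  have hz : ∃ c : Fin m, z = Sum.inl c := by
    rcases hab with ⟨h1, h2⟩ | ⟨h1, h2⟩
    · exact ⟨b, h2⟩
    · exact ⟨a, h2⟩
  have hx : ∃ c : Fin m, x = Sum.inl c := by
    rcases hab with ⟨h1, h2⟩ | ⟨h1, h2⟩
    · exact ⟨a, h1⟩
    · exact ⟨b, h1⟩
  obtain ⟨c, rfl⟩ := hz
  obtain ⟨c', rfl⟩ := hx
  rcases y with d | d
  · simp [fanGraph, joinGraph] at hyz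
  · exact mem_Smix_iff.2 ⟨c', d, rfl⟩

private lemma adjB {s t : Sym2 (Fin m ⊕ Fin n)}
    (h : (M2 (fanGraph m n)).Adj s t) (ht : PR t) (hs : ¬ PR s) : s ∈ Smix m n := by
  obtain ⟨x, y, z, hyz, rfl, rfl⟩ := h
  obtain ⟨a, b, hab⟩ := ht
  rw [Sym2.eq_iff] at hab
  have hx : ∃ c : Fin n, x = Sum.inr c := by
    rcases hab with ⟨h1, h2⟩ | ⟨h1, h2⟩
    · exact ⟨a, h1⟩
    · exact ⟨b, h1⟩
  obtain ⟨c, rfl⟩ := hx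
  rcases y with d | d
  · exact mem_Smix_iff.2 ⟨d, c, Sym2.eq_swap⟩
  · exact absurd ⟨c, d, rfl⟩ hs

private lemma PR_not_mem_Aset {s : Sym2 (Fin m ⊕ Fin n)} (h : PR s) : s ∉ Aset m n := by
  obtain ⟨a, b, rfl⟩ := h
  rw [mem_Aset_iff]
  rintro ⟨c, d, hcd⟩
  rw [Sym2.eq_iff] at hcd
  rcases hcd with ⟨h1, -⟩ | ⟨h1, -⟩ <;> exact absurd h1 (by simp)

end Aux

theorem stmt_5 (m n : ℕ) (hm : 1 ≤ m) (hn : 2 ≤ n) (h : m > 2 * (n - 1)) :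
    ¬ (M2 (fanGraph m n)).IsHamiltonian := by
  intro hham
  have hm0 : (0 : ℕ) < m := hm
  have hn0 : (0 : ℕ) < n := by omega
  set am : Fin m := ⟨0, hm0⟩
  set an : Fin n := ⟨0, hn0⟩
  set a0 : Sym2 (Fin m ⊕ Fin n) := s(Sum.inl am, Sum.inl am) with ha0def
  set b0 : Sym2 (Fin m ⊕ Fin n) := s(Sum.inr an, Sum.inr an) with hb0def
  have hne : a0 ≠ b0 := by
    simp [ha0def, hb0def, Sym2.eq_iff]
  have hcard : Fintype.card (Sym2 (Fin m ⊕ Fin n)) ≠ 1 := by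
    have : Nontrivial (Sym2 (Fin m ⊕ Fin n)) := ⟨a0, b0, hne⟩
    exact Fintype.one_lt_card.ne'
  obtain ⟨v, p, hp⟩ := hham hcard
  -- rotate the cycle to start at a0, then walk to b0
  have ha0mem : a0 ∈ p.support := hp.mem_support a0
  set q := p.rotate a0 ha0mem with hq
  have hb0mem : b0 ∈ q.support := by
    have h1 : b0 ∈ p.support.tail := by
      have := (Walk.isHamiltonianCycle_iff_isCycle_and_support_count_tail_eq_one.mp hp).2 b0
      exact List.count_pos_iff.mp (by omega)
    have h2 := p.support_rotate a0 ha0mem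
    exact List.mem_of_mem_tail (h2.perm.mem_iff.mpr h1)
  set r := q.takeUntil b0 hb0mem with hr
  have hPRa0 : a0 ∈ {s : Sym2 (Fin m ⊕ Fin n) | ¬ PR s} := by
    rintro ⟨a, b, hab⟩
    rw [ha0def, Sym2.eq_iff] at hab
    rcases hab with ⟨h1, -⟩ | ⟨h1, -⟩ <;> exact absurd h1 (by simp)
  have hPRb0 : b0 ∉ {s : Sym2 (Fin m ⊕ Fin n) | ¬ PR s} := by
    simp only [Set.mem_setOf_eq, not_not]
    exact ⟨an, an, rfl⟩
  obtain ⟨d0, hd0r, hd0fst, hd0snd⟩ := r.exists_boundary_dart _ hPRa0 hPRb0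
  have hd0snd' : PR d0.snd := not_not.mp hd0snd
  have hd0p : d0 ∈ p.darts :=
    (p.rotate_darts a0 ha0mem).perm.subset (q.darts_takeUntil_subset hb0mem hd0r)
  have hd0S : d0.fst ∈ Smix m n := adjB d0.adj hd0snd' hd0fst
  have hd0A : d0.snd ∉ Aset m n := PR_not_mem_Aset hd0snd'
  -- counting darts
  have htail : ∀ w, p.support.tail.count w = 1 :=
    (Walk.isHamiltonianCycle_iff_isCycle_and_support_count_tail_eq_one.mp hp).2
  have hcntsnd : ∀ w, (p.darts.map (·.snd)).count w = 1 := by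
    intro w
    rw [p.map_snd_darts]; exact htail w
  have hcntfst : ∀ w, (p.darts.map (·.fst)).count w = 1 := by
    intro w
    have e1 : (p.darts.map (·.fst)).count w + ([v] : List _).count w = p.support.count w := by
      rw [Walk.map_fst_darts, ← List.count_append]
      congr 1
      conv_rhs => rw [← List.dropLast_append_getLast (p.support_ne_nil)]
      rw [p.getLast_support]
    have e2 : p.support.count w = ([v] : List _).count w + p.support.tail.count w := by
      conv_lhs => rw [p.support_eq_cons, ← List.singleton_append, List.count_append]
    have := htail w
    omega
  -- pass to multisets
  set D : Multiset ((M2 (fanGraph m n)).Dart) := ↑p.darts with hD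
  have hfstD : D.map (·.fst) = (Finset.univ : Finset (Sym2 (Fin m ⊕ Fin n))).val := by
    refine Multiset.ext.2 fun w => ?_
    rw [Multiset.count_univ, hD, Multiset.map_coe, Multiset.coe_count]
    exact hcntfst w
  have hsndD : D.map (·.snd) = (Finset.univ : Finset (Sym2 (Fin m ⊕ Fin n))).val := by
    refine Multiset.ext.2 fun w => ?_
    rw [Multiset.count_univ, hD, Multiset.map_coe, Multiset.coe_count]
    exact hcntsnd w
  have hcardS : (Smix m n).card = Multiset.countP (fun d => d.fst ∈ Smix m n) D := by
    have e := Multiset.countP_map (·.fst) D (· ∈ Smix m n)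
    rw [hfstD, ← Multiset.countP_eq_card_filter] at e
    rw [← e, Multiset.countP_eq_card_filter, ← Finset.filter_val, Finset.filter_univ_mem]
    rfl
  have hcardA : (Aset m n).card = Multiset.countP (fun d => d.snd ∈ Aset m n) D := by
    have e := Multiset.countP_map (·.snd) D (· ∈ Aset m n)
    rw [hsndD, ← Multiset.countP_eq_card_filter] at e
    rw [← e, Multiset.countP_eq_card_filter, ← Finset.filter_val, Finset.filter_univ_mem]
    rfl
  -- the key inequality
  have hd0D : d0 ∈ D := by rwa [hD, Multiset.mem_coe]
  set D' := D.erase d0 with hD'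
  have hDD : D = d0 ::ₘ D' := (Multiset.cons_erase hd0D).symm
  have hQ : Multiset.countP (fun d => d.fst ∈ Smix m n) D
      = Multiset.countP (fun d => d.fst ∈ Smix m n) D' + 1 := by
    rw [hDD]
    exact Multiset.countP_cons_of_pos (p := fun d => d.fst ∈ Smix m n) D' hd0S
  have hP : Multiset.countP (fun d : (M2 (fanGraph m n)).Dart => d.snd ∈ Aset m n) D
      = Multiset.countP (fun d => d.snd ∈ Aset m n) D' := by
    rw [hDD]
    exact Multiset.countP_cons_of_neg (p := fun d => d.snd ∈ Aset m n) D' hd0A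
  have hmono : Multiset.countP (fun d : (M2 (fanGraph m n)).Dart => d.snd ∈ Aset m n) D'
      ≤ Multiset.countP (fun d => d.fst ∈ Smix m n) D' := by
    rw [Multiset.countP_eq_card_filter, Multiset.countP_eq_card_filter]
    apply Multiset.card_le_card
    apply Multiset.le_iff_count.2
    intro d
    by_cases hd : d.snd ∈ Aset m n
    · have hd2 : d.fst ∈ Smix m n := adjA d.adj hd
      simp [Multiset.count_filter, hd, hd2]
    · simp [Multiset.count_filter, hd]
  have hkey : (Aset m n).card + 1 ≤ (Smix m n).card := by
    rw [hcardS, hcardA, hQ, hP]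
    omega
  -- cardinalities
  have hScard : (Smix m n).card = m * n := by
    rw [Smix, Finset.card_map, Finset.card_univ, Fintype.card_prod, Fintype.card_fin,
      Fintype.card_fin]
  have hAcard : (Aset m n).card = Nat.choose (m + 1) 2 := by
    rw [Aset, Finset.card_map, Finset.card_univ, Sym2.card, Fintype.card_fin]
  have hchoose : 2 * Nat.choose (m + 1) 2 = (m + 1) * m := by
    rw [Nat.choose_two_right]
    have hev : Even ((m + 1) * m) := by
      rcases Nat.even_or_odd m with he | ho
      · exact he.mul_left _
      · exact (ho.add_one).mul_right _
    obtain ⟨k, hk⟩ := hev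
    simp only [Nat.add_sub_cancel]
    omega
  rw [hScard, hAcard] at hkey
  -- arithmetic contradiction
  have hm2n : 2 * n ≤ m + 1 := by omega
  have k1 : 2 * n * m ≤ (m + 1) * m := Nat.mul_le_mul_right m hm2n
  nlinarith [hkey, hchoose, k1]
end

section
/- With S = {{w_i, v_j} : i ∈ [m], j ∈ [n]} in M_2(F_{m,n}), the number of connected components of M_2(F_{m,n}) − S is at least binom(m+1, 2) + 1, which exceeds |S| = mn whenever m > 2(n−1). -/
open SimpleGraph

lemma isolated_eq_of_reachable {V : Type*} {G : SimpleGraph V} {a b : V}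
    (h : ∀ c, ¬ G.Adj a c) (hr : G.Reachable a b) : a = b := by
  obtain ⟨w⟩ := hr
  cases w with
  | nil => rfl
  | cons hadj _ => exact absurd hadj (h _)

theorem stmt_7 (m n : ℕ) (hm : 1 ≤ m) (hn : 2 ≤ n)
    (S : Set (Sym2 (Fin m ⊕ Fin n)))
    (hS : S = {s | ∃ (i : Fin m) (j : Fin n), s = s(Sum.inl i, Sum.inr j)}) :
    S.ncard = m * n ∧
    (m + 1).choose 2 + 1 ≤
      Nat.card (((M2 (fanGraph m n)).induce Sᶜ).ConnectedComponent) ∧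
    (m > 2 * (n - 1) → (m + 1).choose 2 + 1 > m * n) := by
  subst hS
  set S : Set (Sym2 (Fin m ⊕ Fin n)) :=
    {s | ∃ (i : Fin m) (j : Fin n), s = s(Sum.inl i, Sum.inr j)} with hS
  refine ⟨?_, ?_, ?_⟩
  · -- cardinality of S
    have hf : Function.Bijective (fun p : Fin m × Fin n =>
        (⟨s(Sum.inl p.1, Sum.inr p.2), ⟨p.1, p.2, rfl⟩⟩ : S)) := by
      constructor
      · rintro ⟨i, j⟩ ⟨i', j'⟩ h
        simp only [Subtype.mk.injEq, Sym2.eq_iff] at h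
        rcases h with ⟨h1, h2⟩ | ⟨h1, h2⟩ <;> simp_all
      · rintro ⟨s, i, j, rfl⟩
        exact ⟨(i, j), rfl⟩
    have := Nat.card_eq_of_bijective _ hf
    rw [← Nat.card_coe_set_eq, ← this]
    simp
  · -- component count
    set G' := ((M2 (fanGraph m n)).induce Sᶜ) with hG'
    -- the isolated vertices coming from pairs of w's
    have hmem : ∀ p : Sym2 (Fin m), p.map Sum.inl ∈ Sᶜ := by
      intro p
      induction p using Sym2.inductionOn with
      | hf a b =>
        rintro ⟨i, j, h⟩
        rw [Sym2.map_pair_eq, Sym2.eq_iff] at h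
        rcases h with ⟨h1, h2⟩ | ⟨h1, h2⟩ <;> simp_all
    set A : Sym2 (Fin m) → ↥Sᶜ := fun p => ⟨p.map Sum.inl, hmem p⟩ with hA
    have hiso : ∀ p : Sym2 (Fin m), ∀ c, ¬ G'.Adj (A p) c := by
      rintro p ⟨c, hc⟩ ⟨x, y, z, hadj, h1, h2⟩
      induction p using Sym2.inductionOn with
      | hf a b =>
        have h1' : s(Sum.inl a, Sum.inl b) = s(x, y) := h1
        rw [Sym2.eq_iff] at h1'
        have hy : ∃ i : Fin m, y = Sum.inl i := by
          rcases h1' with ⟨_, h⟩ | ⟨h, _⟩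
          · exact ⟨b, h.symm⟩
          · exact ⟨a, h.symm⟩
        have hx : ∃ i : Fin m, x = Sum.inl i := by
          rcases h1' with ⟨h, _⟩ | ⟨_, h⟩
          · exact ⟨a, h.symm⟩
          · exact ⟨b, h.symm⟩
        obtain ⟨i, rfl⟩ := hy
        obtain ⟨i', rfl⟩ := hx
        cases z with
        | inl k => simp [fanGraph, joinGraph] at hadj
        | inr k => exact hc ⟨i', k, h2⟩
    have hb : s(Sum.inr (⟨0, by omega⟩ : Fin n), Sum.inr ⟨0, by omega⟩) ∈ Sᶜ := by
      rintro ⟨i, j, h⟩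
      rw [Sym2.eq_iff] at h
      rcases h with ⟨h1, h2⟩ | ⟨h1, h2⟩ <;> simp_all
    set B : ↥Sᶜ := ⟨_, hb⟩ with hB
    set g : Sym2 (Fin m) ⊕ Unit → G'.ConnectedComponent := fun x =>
      match x with
      | .inl p => G'.connectedComponentMk (A p)
      | .inr _ => G'.connectedComponentMk B with hg
    have hginj : Function.Injective g := by
      rintro (p | u) (q | v) h
      · have := isolated_eq_of_reachable (hiso p) (ConnectedComponent.exact h)
        rw [hA, Subtype.mk.injEq] at this
        exact congrArg Sum.inl
          (Sym2.map.injective Sum.inl_injective this ▸ rfl)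
      · exfalso
        have := isolated_eq_of_reachable (hiso p) (ConnectedComponent.exact h)
        rw [hA, hB, Subtype.mk.injEq] at this
        induction p using Sym2.inductionOn with
        | hf a b =>
          rw [Sym2.map_pair_eq, Sym2.eq_iff] at this
          rcases this with ⟨h1, h2⟩ | ⟨h1, h2⟩ <;> simp_all
      · exfalso
        have := isolated_eq_of_reachable (hiso q) (ConnectedComponent.exact h.symm)
        rw [hA, hB, Subtype.mk.injEq] at this
        induction q using Sym2.inductionOn with
        | hf a b =>
          rw [Sym2.map_pair_eq, Sym2.eq_iff] at this
          rcases this with ⟨h1, h2⟩ | ⟨h1, h2⟩ <;> simp_all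
      · simp
    have hcard : Nat.card (Sym2 (Fin m) ⊕ Unit) ≤ Nat.card G'.ConnectedComponent :=
      Nat.card_le_card_of_injective g hginj
    calc (m + 1).choose 2 + 1 = Nat.card (Sym2 (Fin m) ⊕ Unit) := by
          simp [Nat.card_eq_fintype_card, Sym2.card]
      _ ≤ _ := hcard
  · -- arithmetic
    intro hmn
    have h1 : 2 * n ≤ m + 1 := by omega
    have h2 : 2 * n * m ≤ (m + 1) * m := Nat.mul_le_mul_right _ h1
    have h3 : (m + 1).choose 2 = (m + 1) * m / 2 := Nat.choose_two_right _
    have h4 : 2 * n * m / 2 ≤ (m + 1) * m / 2 := Nat.div_le_div_right h2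
    have h5 : 2 * n * m = 2 * (n * m) := by ring
    have h6 : n * m = m * n := Nat.mul_comm _ _
    omega
end

section
/- For every n ≥ 2, the complete double vertex graph M_2(F_{1,n}) is Hamiltonian. -/
open SimpleGraph List
open Fin.NatCast



section Aux
variable {α : Type*} {G : SimpleGraph α}


variable {α : Type*} {G : SimpleGraph α}

def mkWalk : (l : List α) → (a b : α) → List.Chain' G.Adj (a :: (l ++ [b])) → G.Walk a b
  | [], a, b, h => Walk.cons (by simpa [List.Chain', List.isChain_pair] using h) Walk.nil
  | c :: l, a, b, h =>
      Walk.cons (List.isChain_cons_cons.1 h).1 (mkWalk l c b (List.isChain_cons_cons.1 h).2)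

lemma mkWalk_support : ∀ (l : List α) (a b : α) (h),
    (mkWalk (G := G) l a b h).support = a :: (l ++ [b])
  | [], a, b, h => rfl
  | c :: l, a, b, h => by
      simp [mkWalk, Walk.support_cons, mkWalk_support l c b (List.isChain_cons_cons.1 h).2]

lemma notmem_edge : ∀ {v u : α} (p : G.Walk v u), p.IsPath → v ≠ u → p.length ≠ 1 →
    s(u, v) ∉ p.edges := by
  intro v u p hp hvu hlen he
  cases p with
  | nil => simp at he
  | @cons _ w _ h' q =>
    rw [Walk.edges_cons, List.mem_cons] at he
    rcases he with he | he
    · rw [Sym2.eq_iff] at he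
      rcases he with ⟨rfl, rfl⟩ | ⟨rfl, -⟩
      · exact hvu rfl
      · have : q = Walk.nil := Walk.isPath_iff_eq_nil.1 hp.of_cons
        subst this; simp at hlen
    · have hv : v ∈ q.support := Walk.snd_mem_support_of_mem_edges q he
      have := hp.support_nodup
      rw [Walk.support_cons, List.nodup_cons] at this
      exact this.1 hv

lemma isHamiltonian_of_list [DecidableEq α] [Fintype α]
    (a b : α) (l : List α)
    (hchain : List.Chain' G.Adj (a :: b :: l ++ [a]))
    (hnodup : (a :: b :: l).Nodup)
    (hmem : ∀ v, v ∈ a :: b :: l)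
    (hl : l ≠ []) : G.IsHamiltonian := by
  intro _
  have hperm : ((b :: l) ++ [a]).Perm (a :: b :: l) := List.perm_append_singleton a (b :: l)
  have hchain' : List.Chain' G.Adj (b :: (l ++ [a])) := (List.isChain_cons_cons.1 hchain).2
  have hab : G.Adj a b := (List.isChain_cons_cons.1 hchain).1
  set q : G.Walk b a := mkWalk l b a hchain' with hq
  have hsupp : q.support = b :: l ++ [a] := mkWalk_support l b a hchain'
  have hqpath : q.IsPath := by
    rw [Walk.isPath_def, hsupp]
    exact hperm.symm.nodup hnodup
  have hba : b ≠ a := by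
    intro h; subst h; simp at hnodup
  have hqlen : q.length ≠ 1 := by
    have h1 : q.support.length = q.length + 1 := (Walk.length_support q)
    rw [hsupp] at h1
    have : l.length ≠ 0 := by simpa using hl
    simp at h1
    omega
  have hedge : s(a, b) ∉ q.edges := notmem_edge q hqpath hba hqlen
  set p : G.Walk a a := Walk.cons hab q with hp
  have hcyc : p.IsCycle := (Walk.cons_isCycle_iff q hab).2 ⟨hqpath, hedge⟩
  refine ⟨a, p, ?_⟩
  rw [Walk.isHamiltonianCycle_iff_isCycle_and_support_count_tail_eq_one]
  refine ⟨hcyc, fun v => ?_⟩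
  have : p.support = a :: q.support := rfl
  rw [this, List.tail_cons, hsupp]
  rw [hperm.count_eq]
  exact List.count_eq_one_of_mem hnodup (hmem v)

end Aux

instance {n : ℕ} : DecidableRel (SimpleGraph.pathGraph n).Adj :=
  fun _ _ => decidable_of_iff _ pathGraph_adj.symm

instance {α β : Type*} (G : SimpleGraph α) (H : SimpleGraph β)
    [DecidableRel G.Adj] [DecidableRel H.Adj] : DecidableRel (joinGraph G H).Adj :=
  fun x y =>
    match x, y with
    | .inl a, .inl b => inferInstanceAs (Decidable (G.Adj a b))
    | .inr a, .inr b => inferInstanceAs (Decidable (H.Adj a b))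
    | .inl _, .inr _ => inferInstanceAs (Decidable True)
    | .inr _, .inl _ => inferInstanceAs (Decidable True)

instance {m n : ℕ} : DecidableRel (fanGraph m n).Adj :=
  fun x y => inferInstanceAs (Decidable ((joinGraph ⊥ (SimpleGraph.pathGraph n)).Adj x y))

instance {V : Type*} [DecidableEq V] [Fintype V] (G : SimpleGraph V)
    [DecidableRel G.Adj] : DecidableRel (M2 G).Adj :=
  fun s t => inferInstanceAs (Decidable (∃ x y z, G.Adj y z ∧ s = s(x, y) ∧ t = s(x, z)))

def topV (m : ℕ) : Sym2 (Fin 1 ⊕ Fin (m + 2)) :=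
  s(Sum.inr (Fin.last (m + 1)), Sum.inr (Fin.last (m + 1)))

def subV (m : ℕ) : Sym2 (Fin 1 ⊕ Fin (m + 2)) :=
  s(Sum.inr ⟨m, by omega⟩, Sum.inr (Fin.last (m + 1)))


lemma fan_adj_cr {n : ℕ} (a : Fin 1) (i : Fin n) : (fanGraph 1 n).Adj (Sum.inl a) (Sum.inr i) := trivial

lemma fan_adj_rr {n : ℕ} {i j : Fin n} (h : i.val + 1 = j.val ∨ j.val + 1 = i.val) :
    (fanGraph 1 n).Adj (Sum.inr i) (Sum.inr j) := pathGraph_adj.2 h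

lemma m2_adj {V : Type*} {G : SimpleGraph V} (x : V) {y z : V} (h : G.Adj y z) :
    (M2 G).Adj s(x, y) s(x, z) := ⟨x, y, z, h, rfl, rfl⟩

def ι (m : ℕ) : Fin 1 ⊕ Fin (m + 2) → Fin 1 ⊕ Fin (m + 3) := Sum.map id Fin.castSucc

lemma ι_inj (m : ℕ) : Function.Injective (ι m) :=
  Function.Injective.sumMap Function.injective_id (Fin.castSucc_injective _)

def φ (m : ℕ) : Sym2 (Fin 1 ⊕ Fin (m + 2)) → Sym2 (Fin 1 ⊕ Fin (m + 3)) := Sym2.map (ι m)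

lemma φ_inj (m : ℕ) : Function.Injective (φ m) := Sym2.map.injective (ι_inj m)

lemma fan_hom {m : ℕ} {y z : Fin 1 ⊕ Fin (m + 2)} (h : (fanGraph 1 (m + 2)).Adj y z) :
    (fanGraph 1 (m + 3)).Adj (ι m y) (ι m z) := by
  cases y with
  | inl a => cases z with
    | inl b => exact absurd h (by simp [fanGraph, joinGraph])
    | inr b => exact fan_adj_cr (n := m + 3) _ _
  | inr a => cases z with
    | inl b => exact (fan_adj_cr (n := m + 3) _ _).symm
    | inr b =>
      have hp : (SimpleGraph.pathGraph (m + 2)).Adj a b := h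
      have := pathGraph_adj.1 hp
      exact fan_adj_rr (by simpa using this)

lemma M2_hom {m : ℕ} {s t : Sym2 (Fin 1 ⊕ Fin (m + 2))}
    (h : (M2 (fanGraph 1 (m + 2))).Adj s t) :
    (M2 (fanGraph 1 (m + 3))).Adj (φ m s) (φ m t) := by
  obtain ⟨x, y, z, h, rfl, rfl⟩ := h
  exact ⟨ι m x, ι m y, ι m z, fan_hom h, Sym2.map_pair_eq .., Sym2.map_pair_eq ..⟩

lemma ι_ne_last {m : ℕ} (x : Fin 1 ⊕ Fin (m + 2)) :
    ι m x ≠ Sum.inr (Fin.last (m + 2)) := by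
  cases x with
  | inl a => simp [ι]
  | inr a =>
    simp only [ι, Sum.map_inr, ne_eq, Sum.inr.injEq]
    intro hc
    have := congrArg Fin.val hc
    simp [Fin.last] at this
    omega

lemma last_not_mem_φ {m : ℕ} (s : Sym2 (Fin 1 ⊕ Fin (m + 2))) :
    Sum.inr (Fin.last (m + 2)) ∉ φ m s := by
  induction s using Sym2.ind with
  | _ x y =>
    rw [φ, Sym2.map_pair_eq, Sym2.mem_iff]
    push_neg
    exact ⟨(ι_ne_last x).symm, (ι_ne_last y).symm⟩

def hE (m i : ℕ) : Sym2 (Fin 1 ⊕ Fin (m + 3)) :=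
  s(Sum.inr (Fin.last (m + 2)), Sum.inr (i : Fin (m + 3)))

def c0 (m : ℕ) : Sym2 (Fin 1 ⊕ Fin (m + 3)) :=
  s(Sum.inr (Fin.last (m + 2)), Sum.inl 0)

def tList (m : ℕ) : List (Sym2 (Fin 1 ⊕ Fin (m + 3))) :=
  (List.range (m + 1)).reverse.map (hE m) ++ [c0 m]

lemma val_cast {m i : ℕ} (h : i < m + 3) : ((i : Fin (m + 3)) : ℕ) = i :=
  Fin.val_cast_of_lt h

lemma chainT (m : ℕ) :
    List.Chain' (M2 (fanGraph 1 (m + 3))).Adj (tList m ++ [topV (m + 1)]) := by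
  rw [tList, List.append_assoc]
  apply List.IsChain.append
  · rw [List.isChain_map, List.isChain_reverse, List.isChain_range_succ]
    intro i hi
    show (M2 (fanGraph 1 (m + 3))).Adj (hE m (i + 1)) (hE m i)
    exact m2_adj _ (fan_adj_rr (Or.inr (by
      rw [val_cast (by omega), val_cast (by omega)])))
  · rw [List.singleton_append, List.isChain_cons_cons]
    refine ⟨?_, List.isChain_singleton _⟩
    show (M2 (fanGraph 1 (m + 3))).Adj s(Sum.inr (Fin.last (m + 2)), Sum.inl 0)
      s(Sum.inr (Fin.last (m + 2)), Sum.inr (Fin.last (m + 2)))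
    exact m2_adj _ (fan_adj_cr 0 _)
  · intro x hx y hy
    rw [List.singleton_append] at hy
    simp only [List.head?_cons, Option.mem_some_iff] at hy
    subst hy
    rw [List.map_reverse, List.getLast?_reverse, List.range_succ_eq_map] at hx
    simp only [List.map_cons, List.head?_cons, Option.mem_some_iff] at hx
    subst hx
    show (M2 (fanGraph 1 (m + 3))).Adj s(Sum.inr (Fin.last (m + 2)), Sum.inr ((0 : ℕ) : Fin (m + 3)))
      s(Sum.inr (Fin.last (m + 2)), Sum.inl 0)
    exact m2_adj _ (fan_adj_cr 0 _).symm

theorem key (m : ℕ) : ∃ r : List (Sym2 (Fin 1 ⊕ Fin (m + 2))),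
    List.Chain' (M2 (fanGraph 1 (m + 2))).Adj (topV m :: subV m :: r ++ [topV m]) ∧
    (topV m :: subV m :: r).Nodup ∧ (∀ v, v ∈ topV m :: subV m :: r) ∧ r ≠ [] := by
  induction m with
  | zero =>
    refine ⟨[s(Sum.inr 0, Sum.inr 0), s(Sum.inl 0, Sum.inr 0), s(Sum.inl 0, Sum.inl 0),
      s(Sum.inl 0, Sum.inr 1)], ?_, by decide, by decide, by decide⟩
    simp only [List.Chain', List.cons_append, List.nil_append, List.isChain_cons_cons, List.isChain_singleton,
      and_true]
    refine ⟨?_, ?_, ?_, ?_, ?_, ?_⟩ <;> decide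
  | succ m ih =>
    obtain ⟨r, hchain, hnodup, hmem, -⟩ := ih
    set G' := M2 (fanGraph 1 (m + 3)) with hG'
    set F := φ m with hF
    set A := topV m with hA
    set B := subV m with hB
    set A' := topV (m + 1) with hA'
    set B' := subV (m + 1) with hB'
    -- explicit forms
    have eB' : B' = s(Sum.inr (Fin.last (m + 2)), Sum.inr (⟨m + 1, by omega⟩ : Fin (m + 3))) := by
      rw [hB', subV]; exact Sym2.eq_swap
    have eFA : F A = s(Sum.inr (⟨m + 1, by omega⟩ : Fin (m + 3)),
        Sum.inr (⟨m + 1, by omega⟩ : Fin (m + 3))) := by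
      rw [hF, hA, φ, topV, Sym2.map_pair_eq]
      rw [Sym2.eq_iff]
      left
      constructor <;> · show Sum.inr _ = _; exact congrArg _ (Fin.ext (by simp))
    have eFB : F B = s(Sum.inr (⟨m, by omega⟩ : Fin (m + 3)),
        Sum.inr (⟨m + 1, by omega⟩ : Fin (m + 3))) := by
      rw [hF, hB, φ, subV, Sym2.map_pair_eq]
      rw [Sym2.eq_iff]
      left
      constructor <;> · show Sum.inr _ = _; exact congrArg _ (Fin.ext (by simp))
    -- adjacency facts
    have hAB' : G'.Adj A' B' := by
      rw [eB', hA', topV, hG']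
      exact m2_adj _ (fan_adj_rr (Or.inr rfl))
    have hB'FA : G'.Adj B' (F A) := by
      rw [hB', subV, eFA, hG']
      exact m2_adj _ (fan_adj_rr (Or.inr rfl))
    -- chain of the mapped reversed old cycle
    have h1 : List.Chain' (M2 (fanGraph 1 (m + 2))).Adj (B :: (r ++ [A])) :=
      (List.isChain_cons_cons.1 hchain).2
    have h2 : List.Chain' (flip (M2 (fanGraph 1 (m + 2))).Adj) (B :: (r ++ [A])) :=
      h1.imp (fun a b h => h.symm)
    have h3 : List.Chain' (M2 (fanGraph 1 (m + 2))).Adj ((B :: (r ++ [A])).reverse) :=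
      List.isChain_reverse.2 h2
    have h4 : (B :: (r ++ [A])).reverse = A :: (r.reverse ++ [B]) := by simp
    rw [h4] at h3
    have hX : List.Chain' G'.Adj (F A :: ((r.map F).reverse ++ [F B])) := by
      have h5 := List.isChain_map_of_isChain F (fun a b h => M2_hom h) h3
      simpa [List.Chain', List.map_reverse] using h5
    have hS1 : List.Chain' G'.Adj (A' :: B' :: F A :: ((r.map F).reverse ++ [F B])) :=
      List.isChain_cons_cons.2 ⟨hAB', List.isChain_cons_cons.2 ⟨hB'FA, hX⟩⟩
    have htHead : tList m = hE m m :: ((List.range m).reverse.map (hE m) ++ [c0 m]) := by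
      rw [tList, List.range_succ]; simp
    have hEm : hE m m = s(Sum.inr (⟨m, by omega⟩ : Fin (m + 3)), Sum.inr (Fin.last (m + 2))) := by
      rw [hE, Sym2.eq_swap]
      rw [Sym2.eq_iff]; left
      exact ⟨congrArg _ (Fin.ext (by simp [val_cast (show m < m + 3 by omega)])), rfl⟩
    have hFBhE : G'.Adj (F B) (hE m m) := by
      rw [eFB, hEm, hG']
      exact m2_adj _ (fan_adj_rr (Or.inl (by simp [Fin.last])))
    -- permutation bookkeeping
    have p1 : (F A :: ((r.map F).reverse ++ [F B])) ~ (F A :: F B :: r.map F) :=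
      ((List.perm_append_singleton _ _).trans ((List.reverse_perm _).cons _)).cons _
    have hperm : (A' :: B' :: ((F A :: ((r.map F).reverse ++ [F B])) ++ tList m)) ~
        ((A :: B :: r).map F) ++ (A' :: B' :: tList m) := by
      calc A' :: B' :: ((F A :: ((r.map F).reverse ++ [F B])) ++ tList m)
          ~ A' :: B' :: ((F A :: F B :: r.map F) ++ tList m) :=
            ((p1.append_right _).cons _).cons _
        _ = ([A', B'] ++ (F A :: F B :: r.map F)) ++ tList m := rfl
        _ ~ ((F A :: F B :: r.map F) ++ [A', B']) ++ tList m :=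
            List.perm_append_comm.append_right _
        _ = (A :: B :: r).map F ++ (A' :: B' :: tList m) := by
            simp [List.append_assoc]
    have hNEWeq : A' :: B' :: tList m = (List.range (m + 3)).reverse.map (hE m) ++ [c0 m] := by
      have hr : (List.range (m + 3)).reverse = (m + 2) :: (m + 1) :: (List.range (m + 1)).reverse := by
        rw [List.range_succ, List.range_succ]; simp
      have vc2 : ((m + 2 : ℕ) : Fin (m + 3)) = Fin.last (m + 2) :=
        Fin.ext (by rw [Fin.val_cast_of_lt (by omega)]; rfl)
      have vc1 : ((m + 1 : ℕ) : Fin (m + 3)) = (⟨m + 1, by omega⟩ : Fin (m + 3)) :=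
        Fin.ext (Fin.val_cast_of_lt (by omega))
      rw [tList, hr, List.map_cons, List.map_cons, List.cons_append, List.cons_append]
      congr 1
      · rw [hA', topV, hE, vc2]
      congr 1
      · rw [eB', hE, vc1]
    have nNEW : ((List.range (m + 3)).reverse.map (hE m) ++ [c0 m]).Nodup := by
      refine List.Nodup.append ?_ (List.nodup_singleton _) ?_
      · refine List.Nodup.map_on ?_ (List.nodup_reverse.2 List.nodup_range)
        intro i hi j hj hij
        rw [List.mem_reverse, List.mem_range] at hi hj
        rw [hE, hE, Sym2.eq_iff] at hij
        rcases hij with ⟨-, h⟩ | ⟨h1, h2⟩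
        · have := congrArg Fin.val (Sum.inr.inj h)
          rwa [val_cast hi, val_cast hj] at this
        · have e1 := congrArg Fin.val (Sum.inr.inj h1)
          have e2 := congrArg Fin.val (Sum.inr.inj h2)
          rw [val_cast hj] at e1
          rw [val_cast hi] at e2
          simp [Fin.last] at e1 e2
          omega
      · intro x hx hc
        rw [List.mem_singleton] at hc
        subst hc
        obtain ⟨i, -, he⟩ := List.mem_map.1 hx
        rw [hE, c0, Sym2.eq_iff] at he
        rcases he with ⟨-, h⟩ | ⟨h, -⟩ <;> exact absurd h (by simp)
    have nM : ((A :: B :: r).map F).Nodup := hnodup.map (φ_inj m)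
    have disj : List.Disjoint ((A :: B :: r).map F) (A' :: B' :: tList m) := by
      rw [hNEWeq]
      intro x hx hx'
      obtain ⟨s, -, rfl⟩ := List.mem_map.1 hx
      apply last_not_mem_φ (m := m) s
      show Sum.inr (Fin.last (m + 2)) ∈ F s
      rcases List.mem_append.1 hx' with h | h
      · obtain ⟨i, -, he⟩ := List.mem_map.1 h
        rw [← he, hE, Sym2.mem_iff]
        left; rfl
      · rw [List.mem_singleton] at h
        rw [h, c0, Sym2.mem_iff]
        left; rfl
    refine ⟨(F A :: ((r.map F).reverse ++ [F B])) ++ tList m, ?_, ?_, ?_, by simp⟩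
    · -- the chain
      have hj : ∀ x ∈ (A' :: B' :: F A :: ((r.map F).reverse ++ [F B])).getLast?,
          ∀ y ∈ (tList m ++ [A']).head?, G'.Adj x y := by
        intro x hx y hy
        have e : (A' :: B' :: F A :: ((r.map F).reverse ++ [F B])) =
            (A' :: B' :: F A :: (r.map F).reverse) ++ [F B] := by simp
        rw [e, List.getLast?_concat, Option.mem_some_iff] at hx
        subst hx
        rw [htHead, List.cons_append, List.head?_cons, Option.mem_some_iff] at hy
        subst hy
        exact hFBhE
      have hbig := hS1.append (chainT m) hj
      simpa [List.Chain', List.cons_append, List.append_assoc] using hbig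
    · exact (hperm.nodup_iff).2 (nM.append (hNEWeq ▸ nNEW) disj)
    · intro v
      rw [hperm.mem_iff, List.mem_append]
      have cover : ∀ x : Fin 1 ⊕ Fin (m + 3),
          s(x, Sum.inr (Fin.last (m + 2))) ∈ (A' :: B' :: tList m) := by
        intro x
        rw [hNEWeq, List.mem_append]
        cases x with
        | inl a =>
          right
          rw [List.mem_singleton, c0, Sym2.eq_iff]
          right
          exact ⟨by rw [Subsingleton.elim a 0], rfl⟩
        | inr j =>
          left
          refine List.mem_map.2 ⟨j.val, by simp [List.mem_range], ?_⟩
          rw [hE, Sym2.eq_iff]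
          right
          exact ⟨rfl, congrArg _ (Fin.cast_val_eq_self j)⟩
      have lift : ∀ w : Fin 1 ⊕ Fin (m + 3), w ≠ Sum.inr (Fin.last (m + 2)) →
          ∃ w', ι m w' = w := by
        intro w hw
        cases w with
        | inl a => exact ⟨Sum.inl a, rfl⟩
        | inr j =>
          have hj : j ≠ Fin.last (m + 2) := by simpa using hw
          obtain ⟨j', hj'⟩ := Fin.exists_castSucc_eq.2 hj
          exact ⟨Sum.inr j', by simp [ι, hj']⟩
      induction v using Sym2.ind with
      | _ x y =>
        by_cases hy : y = Sum.inr (Fin.last (m + 2))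
        · subst hy; right; exact cover x
        · by_cases hx : x = Sum.inr (Fin.last (m + 2))
          · subst hx; right; rw [Sym2.eq_swap]; exact cover y
          · obtain ⟨x', rfl⟩ := lift x hx
            obtain ⟨y', rfl⟩ := lift y hy
            left
            exact List.mem_map.2 ⟨s(x', y'), hmem _, by rw [hF, φ, Sym2.map_pair_eq]⟩



theorem stmt_8 (n : ℕ) (hn : 2 ≤ n) :
    (M2 (fanGraph 1 n)).IsHamiltonian := by
  obtain ⟨m, rfl⟩ : ∃ m, n = m + 2 := ⟨n - 2, by omega⟩
  obtain ⟨r, hchain, hnodup, hmem, hr⟩ := key m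
  exact isHamiltonian_of_list (topV m) (subV m) r hchain hnodup hmem hr
end

section
/- For n = 4 or n ≥ 6, the complete double vertex graph M_2(C_n) of the cycle C_n is not Hamiltonian; in particular, Hamiltonicity of G does not imply Hamiltonicity of M_2(G). -/
open SimpleGraph

section CycleLemmas

private lemma support_eq_map_getVert {V : Type*} {G : SimpleGraph V} {u v : V} (p : G.Walk u v) :
    p.support = (List.range (p.length + 1)).map p.getVert := by
  induction p with
  | nil => simp [Walk.getVert]
  | cons h q ih =>
    rw [Walk.length_cons, List.range_succ_eq_map, List.map_cons, List.map_map]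
    have h2 : (Walk.cons h q).getVert ∘ Nat.succ = q.getVert := rfl
    rw [h2, ← ih, Walk.support_cons]
    rfl

private lemma cycle_getVert_inj {V : Type*} {G : SimpleGraph V} {v : V} {q : G.Walk v v}
    (hq : q.IsCycle) {i j : ℕ} (hi : i < q.length) (hj : j < q.length)
    (h : q.getVert (i + 1) = q.getVert (j + 1)) : i = j := by
  have hnd := hq.support_nodup
  rw [support_eq_map_getVert, List.range_succ_eq_map, List.map_cons, List.tail_cons,
    List.map_map] at hnd
  exact List.inj_on_of_nodup_map hnd (List.mem_range.2 hi) (List.mem_range.2 hj) h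

private lemma cycle_getVert_start {V : Type*} {G : SimpleGraph V} {v : V} {q : G.Walk v v}
    (hq : q.IsCycle) {j : ℕ} (hj : j ≤ q.length) (h : q.getVert j = v) :
    j = 0 ∨ j = q.length := by
  rcases Nat.eq_zero_or_pos j with rfl | hj0
  · exact Or.inl rfl
  · right
    obtain ⟨k, rfl⟩ := Nat.exists_eq_add_of_lt hj0
    have h3 := hq.three_le_length
    obtain ⟨l, hl⟩ : ∃ l, q.length = l + 1 := ⟨q.length - 1, by omega⟩
    rcases Nat.lt_or_ge (k + 1) q.length with hlt | hge
    · have hk : 0 + k + 1 = k + 1 := by omega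
      rw [hk] at h ⊢
      have hgl : q.getVert (l + 1) = v := by rw [← hl]; exact q.getVert_length
      have := cycle_getVert_inj hq (by omega) (by omega : l < q.length) (h.trans hgl.symm)
      omega
    · omega

private lemma cycle_adj_start {V : Type*} {G : SimpleGraph V} {v w : V} {q : G.Walk v v}
    (hq : q.IsCycle) :
    q.toSubgraph.Adj v w ↔ w = q.getVert 1 ∨ w = q.getVert (q.length - 1) := by
  have h3 := hq.three_le_length
  constructor
  · intro h
    obtain ⟨i, hi, hilen⟩ := (Walk.toSubgraph_adj_iff _).1 h
    rw [Sym2.eq_iff] at hi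
    rcases hi with ⟨h1, h2⟩ | ⟨h1, h2⟩
    · have := cycle_getVert_start hq (le_of_lt hilen) h1
      have hi0 : i = 0 := by omega
      subst hi0
      exact Or.inl h2.symm
    · have := cycle_getVert_start hq (by omega : i + 1 ≤ q.length) h2
      have : i = q.length - 1 := by omega
      subst this
      exact Or.inr h1.symm
  · rintro (rfl | rfl)
    · have := q.toSubgraph_adj_getVert (by omega : 0 < q.length)
      rwa [q.getVert_zero] at this
    · have := q.toSubgraph_adj_getVert (by omega : q.length - 1 < q.length)
      have hl : q.length - 1 + 1 = q.length := by omega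
      rw [hl, q.getVert_length] at this
      exact this.symm

private lemma cycle_snd_ne {V : Type*} {G : SimpleGraph V} {v : V} {q : G.Walk v v}
    (hq : q.IsCycle) : q.getVert 1 ≠ q.getVert (q.length - 1) := by
  have h3 := hq.three_le_length
  intro h
  have h1 : (1 : ℕ) = 0 + 1 := rfl
  have h2 : q.length - 1 = (q.length - 2) + 1 := by omega
  rw [h1, h2] at h
  have := cycle_getVert_inj hq (by omega) (by omega) h
  omega

private lemma ham_two_nbrs {V : Type*} [DecidableEq V] {G : SimpleGraph V} {a : V}
    {p : G.Walk a a} (hp : p.IsHamiltonianCycle) (v : V) :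
    ∃ w1 w2, w1 ≠ w2 ∧ ∀ w, (p.toSubgraph.Adj v w ↔ w = w1 ∨ w = w2) := by
  have hv : v ∈ p.support := hp.mem_support v
  have hq := hp.isCycle.rotate hv
  refine ⟨_, _, cycle_snd_ne hq, fun w => ?_⟩
  rw [← Walk.toSubgraph_rotate p hv]
  exact cycle_adj_start hq

private lemma pair_force {α : Type*} {P : α → Prop} {w1 w2 x1 x2 : α}
    (hiff : ∀ w, P w ↔ w = w1 ∨ w = w2) (hx : x1 ≠ x2) (h1 : P x1) (h2 : P x2) :
    ∀ t, P t → t = x1 ∨ t = x2 := by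
  have a1 := (hiff x1).1 h1
  have a2 := (hiff x2).1 h2
  intro t ht
  have at' := (hiff t).1 ht
  rcases a1 with rfl | rfl <;> rcases a2 with rfl | rfl <;> tauto

end CycleLemmas

section M2Cycle

private lemma m2_adj_diag {m : ℕ} (a : Fin (m+4)) (t : Sym2 (Fin (m+4))) :
    (M2 (cycleGraph (m+4))).Adj s(a,a) t ↔ t = s(a, a-1) ∨ t = s(a, a+1) := by
  constructor
  · rintro ⟨x, y, z, hyz, hs, rfl⟩
    rw [Sym2.eq_iff] at hs
    obtain ⟨hx, hy⟩ : x = a ∧ y = a := by tauto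
    rw [hy, cycleGraph_adj (n := m+2)] at hyz
    rw [hx]
    rcases hyz with h | h
    · left
      have hz : z = a - 1 := by rw [← h]; abel
      rw [hz]
    · right
      have hz : z = a + 1 := by rw [← h]; abel
      rw [hz]
  · rintro (rfl | rfl)
    · exact ⟨a, a, a - 1, by rw [cycleGraph_adj (n := m+2)]; left; exact sub_sub_cancel a 1,
        rfl, rfl⟩
    · exact ⟨a, a, a + 1, by rw [cycleGraph_adj (n := m+2)]; right; exact add_sub_cancel_left a 1,
        rfl, rfl⟩

private lemma fin_ne_add_one {m : ℕ} (a : Fin (m+4)) : a ≠ a + 1 := by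
  intro h
  have h2 : (0 : Fin (m+4)) = 1 := by
    have := congrArg (· - a) h
    simpa using this
  simp [Fin.ext_iff] at h2

private lemma not_ham (m : ℕ) : ¬ (M2 (cycleGraph (m+4))).IsHamiltonian := by
  intro hham
  have hv2ne : (s(⟨0, by omega⟩, ⟨0, by omega⟩) : Sym2 (Fin (m+4)))
      ≠ s(⟨0, by omega⟩, ⟨2, by omega⟩) := by
    intro h
    rw [Sym2.eq_iff] at h
    have h2 : (⟨0, by omega⟩ : Fin (m+4)) = ⟨2, by omega⟩ := by tauto
    simp [Fin.ext_iff] at h2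
  have hnt : Nontrivial (Sym2 (Fin (m+4))) := ⟨_, _, hv2ne⟩
  obtain ⟨a0, p, hp⟩ := hham (Fintype.one_lt_card.ne')
  set H := p.toSubgraph with hHdef
  -- every subgraph-neighbor of a diagonal vertex
  have hdiag_sub : ∀ (a : Fin (m+4)) t, H.Adj s(a,a) t → t = s(a, a-1) ∨ t = s(a, a+1) :=
    fun a t h => (m2_adj_diag a t).1 h.adj_sub
  -- both forced edges at each diagonal vertex
  have hdiag_both : ∀ a : Fin (m+4), H.Adj s(a,a) s(a, a-1) ∧ H.Adj s(a,a) s(a, a+1) := by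
    intro a
    obtain ⟨w1, w2, hne, hiff⟩ := ham_two_nbrs hp s(a,a)
    have h1 : H.Adj s(a,a) w1 := (hiff w1).2 (Or.inl rfl)
    have h2 : H.Adj s(a,a) w2 := (hiff w2).2 (Or.inr rfl)
    rcases hdiag_sub a w1 h1 with h1' | h1' <;> rcases hdiag_sub a w2 h2 with h2' | h2'
    · exact absurd (h1'.trans h2'.symm) hne
    · rw [h1'] at h1; rw [h2'] at h2; exact ⟨h1, h2⟩
    · rw [h1'] at h1; rw [h2'] at h2; exact ⟨h2, h1⟩
    · exact absurd (h1'.trans h2'.symm) hne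
  -- forced edges at rim vertices
  have h_ea_da : ∀ a : Fin (m+4), H.Adj s(a, a+1) s(a,a) := fun a => ((hdiag_both a).2).symm
  have h_ea_da1 : ∀ a : Fin (m+4), H.Adj s(a, a+1) s(a+1, a+1) := by
    intro a
    have := ((hdiag_both (a+1)).1).symm
    have hsimp : (a + 1) - 1 = a := by abel
    rw [hsimp] at this
    rwa [Sym2.eq_swap] at this
  have hdne : ∀ a : Fin (m+4), (s(a,a) : Sym2 (Fin (m+4))) ≠ s(a+1, a+1) := by
    intro a h
    rw [Sym2.eq_iff] at h
    have : a = a + 1 := by tauto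
    exact fin_ne_add_one a this
  have hedge_sub : ∀ (a : Fin (m+4)) t, H.Adj s(a, a+1) t →
      t = s(a,a) ∨ t = s(a+1, a+1) := by
    intro a
    obtain ⟨w1, w2, hne, hiff⟩ := ham_two_nbrs hp s(a, a+1)
    exact pair_force hiff (hdne a) (h_ea_da a) (h_ea_da1 a)
  -- the closed predicate
  set P : Sym2 (Fin (m+4)) → Prop :=
    fun s => ∃ a b : Fin (m+4), s = s(a, b) ∧ (b = a ∨ b = a + 1) with hPdef
  have hclos : ∀ s t, P s → H.Adj s t → P t := by
    rintro s t ⟨a, b, rfl, hb | hb⟩ hadj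
    · rw [hb] at hadj
      rcases hdiag_sub a t hadj with rfl | rfl
      · exact ⟨a - 1, a, by rw [Sym2.eq_swap], Or.inr (by abel)⟩
      · exact ⟨a, a + 1, rfl, Or.inr rfl⟩
    · rw [hb] at hadj
      rcases hedge_sub a t hadj with rfl | rfl
      · exact ⟨a, a, rfl, Or.inl rfl⟩
      · exact ⟨a + 1, a + 1, rfl, Or.inl rfl⟩
  -- connectivity
  have hconn := p.toSubgraph_connected
  have hd0 : (s(⟨0, by omega⟩, ⟨0, by omega⟩) : Sym2 (Fin (m+4))) ∈ H.verts :=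
    (p.mem_verts_toSubgraph).2 (hp.mem_support _)
  have hv0 : (s(⟨0, by omega⟩, ⟨2, by omega⟩) : Sym2 (Fin (m+4))) ∈ H.verts :=
    (p.mem_verts_toSubgraph).2 (hp.mem_support _)
  obtain ⟨w⟩ := hconn ⟨_, hd0⟩ ⟨_, hv0⟩
  have key : ∀ (x y : H.verts) (w : H.coe.Walk x y), P x.1 → P y.1 := by
    intro x y w
    induction w with
    | nil => exact id
    | cons hadj w ih =>
      intro hx
      exact ih (hclos _ _ hx (by exact_mod_cast hadj))
  have hPv0 : P s(⟨0, by omega⟩, ⟨2, by omega⟩) :=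
    key _ _ w ⟨⟨0, by omega⟩, ⟨0, by omega⟩, rfl, Or.inl rfl⟩
  obtain ⟨a, b, heq, hb⟩ := hPv0
  rw [Sym2.eq_iff] at heq
  rcases heq with ⟨rfl, rfl⟩ | ⟨rfl, rfl⟩
  · rcases hb with hb | hb <;> simp [Fin.ext_iff, Fin.val_add, Nat.mod_eq_of_lt] at hb
  · rcases hb with hb | hb <;> simp [Fin.ext_iff, Fin.val_add, Nat.mod_eq_of_lt] at hb

end M2Cycle

section C4

private def w4 : (cycleGraph 4).Walk 0 0 :=
  Walk.cons (by decide : (cycleGraph 4).Adj 0 1)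
    (Walk.cons (by decide : (cycleGraph 4).Adj 1 2)
      (Walk.cons (by decide : (cycleGraph 4).Adj 2 3)
        (Walk.cons (by decide : (cycleGraph 4).Adj 3 0) Walk.nil)))

private lemma c4_ham : (cycleGraph 4).IsHamiltonian := by
  intro _
  refine ⟨0, w4, ⟨⟨⟨by decide⟩, by simp [w4]⟩, by decide⟩, (by decide : ∀ a : Fin 4, w4.tail.support.count a = 1)⟩

end C4

theorem stmt_16 :
    (∀ n : ℕ, n = 4 ∨ 6 ≤ n → ¬ (M2 (SimpleGraph.cycleGraph n)).IsHamiltonian) ∧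
    ∃ (n : ℕ) (G : SimpleGraph (Fin n)),
      G.IsHamiltonian ∧ ¬ (M2 G).IsHamiltonian := by
  constructor
  · intro n hn
    obtain ⟨m, rfl⟩ : ∃ m, n = m + 4 := ⟨n - 4, by omega⟩
    exact not_ham m
  · exact ⟨4, cycleGraph 4, c4_ham, not_ham 0⟩
end
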